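/- Let K be a field, and let q be a cubic form (homogeneous of degree 3) over K. If q has a nontrivial zero over a quadratic extension L of K, then q has a nontrivial zero over K. -/

import Mathlib

open Polynomial in
lemma aux_coeff_prod {R : Type*} [CommSemiring R] {ι : Type*} (s : Finset ι)
    (f : ι → Polynomial R) (d : ι → ℕ) (h : ∀ i ∈ s, (f i).natDegree ≤ d i) :
    (∏ i ∈ s, f i).coeff (∑ i ∈ s, d i) = ∏ i ∈ s, (f i).coeff (d i) := by
  classical
  induction s using Finset.induction with
  | empty => simp
  | @insert a s ha ih =>
    rw [Finset.prod_insert ha, Finset.sum_insert ha,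
      Polynomial.coeff_mul_add_eq_of_natDegree_le (h a (Finset.mem_insert_self a s))
        (le_trans (Polynomial.natDegree_prod_le s f)
          (Finset.sum_le_sum fun i hi => h i (Finset.mem_insert_of_mem hi))),
      ih fun i hi => h i (Finset.mem_insert_of_mem hi), Finset.prod_insert ha]

open Polynomial in
lemma aux_P {K : Type*} [CommRing K] {n : ℕ} {q : MvPolynomial (Fin n) K}
    (hq : q.IsHomogeneous 3) (x y : Fin n → K) :
    (MvPolynomial.aeval (fun i => Polynomial.C (x i) + Polynomial.X * Polynomial.C (y i)) q).natDegree ≤ 3 ∧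
    (MvPolynomial.aeval (fun i => Polynomial.C (x i) + Polynomial.X * Polynomial.C (y i)) q).coeff 3 = MvPolynomial.eval y q := by
  classical
  set f : Fin n → Polynomial K := fun i => Polynomial.C (x i) + Polynomial.X * Polynomial.C (y i) with hf
  have hf1 : ∀ i, (f i).natDegree ≤ 1 := by
    intro i
    refine le_trans (Polynomial.natDegree_add_le _ _) (max_le (by simp [Polynomial.natDegree_X_le]) ?_)
    exact le_trans (Polynomial.natDegree_mul_le) (by simp [Polynomial.natDegree_X_le])
  have hfc : ∀ i, (f i).coeff 1 = y i := by
    intro i; simp [hf, Polynomial.coeff_X_mul]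
  have hsupp : ∀ d ∈ q.support, ∑ i, d i = 3 := by
    intro d hd
    have h1 := hq (MvPolynomial.mem_support_iff.mp hd)
    rw [← h1, show (1 : Fin n → ℕ) = fun _ => 1 from rfl, ← Finsupp.degree_eq_weight_one, Finsupp.degree_apply]
    exact (Finset.sum_subset (Finset.subset_univ _)
      (by simp +contextual [Finsupp.notMem_support_iff])).symm
  have hterm : ∀ d : Fin n →₀ ℕ, (MvPolynomial.aeval f) ((MvPolynomial.monomial d) (MvPolynomial.coeff d q))
      = Polynomial.C (MvPolynomial.coeff d q) * ∏ i, f i ^ d i := by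
    intro d
    rw [MvPolynomial.aeval_monomial, Finsupp.prod_fintype]
    · rfl
    · intro i; exact pow_zero _
  have hdegt : ∀ d ∈ q.support, ((MvPolynomial.aeval f) ((MvPolynomial.monomial d) (MvPolynomial.coeff d q))).natDegree ≤ 3 := by
    intro d hd
    rw [hterm]
    refine le_trans (Polynomial.natDegree_mul_le) ?_
    rw [Polynomial.natDegree_C, zero_add]
    refine le_trans (Polynomial.natDegree_prod_le _ _) ?_
    rw [← hsupp d hd]
    refine Finset.sum_le_sum fun i _ => ?_
    exact le_trans (Polynomial.natDegree_pow_le) (by simpa using Nat.mul_le_mul_left (d i) (hf1 i))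
  have hcoefft : ∀ d ∈ q.support, ((MvPolynomial.aeval f) ((MvPolynomial.monomial d) (MvPolynomial.coeff d q))).coeff 3
      = MvPolynomial.coeff d q * ∏ i, y i ^ d i := by
    intro d hd
    rw [hterm, Polynomial.coeff_C_mul, ← hsupp d hd,
      aux_coeff_prod Finset.univ (fun i => f i ^ d i) (fun i => d i)
        (fun i _ => le_trans Polynomial.natDegree_pow_le (by simpa using Nat.mul_le_mul_left (d i) (hf1 i)))]
    congr 1
    refine Finset.prod_congr rfl fun i _ => ?_
    have := Polynomial.coeff_pow_of_natDegree_le (p := f i) (n := 1) (m := d i) (hf1 i)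
    rw [mul_one] at this
    rw [this, hfc]
  constructor
  · conv_lhs => rw [q.as_sum, map_sum]
    exact Polynomial.natDegree_sum_le_of_forall_le _ _ hdegt
  · conv_lhs => rw [q.as_sum, map_sum]
    rw [Polynomial.finset_sum_coeff, MvPolynomial.eval_eq']
    exact Finset.sum_congr rfl hcoefft

lemma aux_eval_smul {R : Type*} [CommSemiring R] {n m : ℕ} {φ : MvPolynomial (Fin n) R}
    (hφ : φ.IsHomogeneous m) (c : R) (w : Fin n → R) :
    MvPolynomial.eval (c • w) φ = c ^ m * MvPolynomial.eval w φ := by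
  rw [MvPolynomial.eval_eq', MvPolynomial.eval_eq', Finset.mul_sum]
  refine Finset.sum_congr rfl fun d hd => ?_
  have hdm : ∑ i, d i = m := by
    have h1 := hφ (MvPolynomial.mem_support_iff.mp hd)
    rw [← h1, show (1 : Fin n → ℕ) = fun _ => 1 from rfl, ← Finsupp.degree_eq_weight_one, Finsupp.degree_apply]
    exact (Finset.sum_subset (Finset.subset_univ _) (by simp +contextual [Finsupp.notMem_support_iff])).symm
  have : ∏ i, (c • w) i ^ d i = (∏ i, c ^ d i) * ∏ i, w i ^ d i := by
    rw [← Finset.prod_mul_distrib]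
    simp [mul_pow]
  rw [this, Finset.prod_pow_eq_pow_sum, hdm]
  ring

open MvPolynomial in
theorem stmt_9 (K L : Type*) [Field K] [Field L] [Algebra K L]
    (hdeg : Module.finrank K L = 2)
    (n : ℕ) (q : MvPolynomial (Fin n) K) (hq : q.IsHomogeneous 3)
    (hL : ∃ v : Fin n → L, v ≠ 0 ∧ eval v (q.map (algebraMap K L)) = 0) :
    ∃ w : Fin n → K, w ≠ 0 ∧ eval w q = 0 := by
  classical
  obtain ⟨v, hv0, hqv⟩ := hL
  have : Module.Finite K L := Module.finite_of_finrank_eq_succ (n := 1) hdeg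
  have hinj : Function.Injective (algebraMap K L) := (algebraMap K L).injective
  -- find θ ∉ range of algebraMap
  obtain ⟨θ, hθ⟩ : ∃ θ : L, θ ∉ Set.range (algebraMap K L) := by
    by_contra h
    push_neg at h
    have hsurj : Function.Surjective (algebraMap K L) := fun z => h z
    have e : K ≃ₗ[K] L := LinearEquiv.ofBijective (Algebra.linearMap K L) ⟨hinj, hsurj⟩
    have : Module.finrank K L = 1 := by rw [← e.finrank_eq, Module.finrank_self]
    omega
  -- basis 1, θ
  have hli : LinearIndependent K ![(1 : L), θ] := by
    rw [LinearIndependent.pair_iff' one_ne_zero]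
    intro a ha
    exact hθ ⟨a, by rw [← ha, Algebra.smul_def, mul_one]⟩
  let b : Module.Basis (Fin 2) K L := basisOfLinearIndependentOfCardEqFinrank hli (by simp [hdeg])
  have hb : ∀ j, b j = ![(1 : L), θ] j := fun j => by
    rw [coe_basisOfLinearIndependentOfCardEqFinrank]
  set x : Fin n → K := fun i => b.repr (v i) 0 with hx
  set y : Fin n → K := fun i => b.repr (v i) 1 with hy'
  have hv : ∀ i, v i = algebraMap K L (x i) + θ * algebraMap K L (y i) := by
    intro i
    have := b.sum_repr (v i)
    rw [Fin.sum_univ_two, hb 0, hb 1] at this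
    simp only [Matrix.cons_val_zero, Matrix.cons_val_one, Matrix.head_cons] at this
    rw [← this, Algebra.smul_def, mul_one, Algebra.smul_def, mul_comm]
  have hcomm : ∀ w : Fin n → K,
      eval (fun i => algebraMap K L (w i)) (q.map (algebraMap K L)) = algebraMap K L (eval w q) := by
    intro w
    rw [MvPolynomial.eval_map]
    have h := MvPolynomial.eval₂_comp_left (algebraMap K L) (RingHom.id K) w q
    simp only [RingHom.comp_id] at h
    exact h.symm
  by_cases hycase : y = 0
  · refine ⟨x, ?_, ?_⟩
    · intro hx0
      apply hv0
      funext i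
      rw [hv i]
      simp [congrFun hx0 i, congrFun hycase i]
    · apply hinj
      rw [map_zero, ← hcomm x]
      have hveq : (fun i => algebraMap K L (x i)) = v := by
        funext i
        rw [hv i, congrFun hycase i]
        simp
      rw [hveq]
      exact hqv
  by_cases hqy : eval y q = 0
  · exact ⟨y, hycase, hqy⟩
  set P : Polynomial K :=
    MvPolynomial.aeval (fun i => Polynomial.C (x i) + Polynomial.X * Polynomial.C (y i)) q with hPdef
  obtain ⟨hdP, hcP⟩ := aux_P hq x y
  rw [← hPdef] at hdP hcP
  have hPθ : Polynomial.aeval θ P = 0 := by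
    rw [hPdef]
    have h1 := AlgHom.congr_fun (MvPolynomial.comp_aeval
      (f := fun i => Polynomial.C (x i) + Polynomial.X * Polynomial.C (y i))
      (φ := Polynomial.aeval θ)) q
    simp only [AlgHom.coe_comp, Function.comp_apply] at h1
    rw [h1]
    have h2 : (fun i => Polynomial.aeval θ (Polynomial.C (x i) + Polynomial.X * Polynomial.C (y i))) = v := by
      funext i
      rw [hv i]
      simp only [map_add, map_mul, Polynomial.aeval_C, Polynomial.aeval_X]
    rw [h2, ← hqv, MvPolynomial.aeval_def, MvPolynomial.eval₂_eq_eval_map]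
  have hPeval : ∀ t : K, Polynomial.eval t P = eval (x + t • y) q := by
    intro t
    rw [hPdef, ← Polynomial.coe_aeval_eq_eval]
    have h1 := AlgHom.congr_fun (MvPolynomial.comp_aeval
      (f := fun i => Polynomial.C (x i) + Polynomial.X * Polynomial.C (y i))
      (φ := Polynomial.aeval t)) q
    simp only [AlgHom.coe_comp, Function.comp_apply] at h1
    rw [h1]
    have h2 : (fun i => Polynomial.aeval t (Polynomial.C (x i) + Polynomial.X * Polynomial.C (y i)))
        = (x + t • y) := by
      funext i
      simp only [map_add, map_mul, Polynomial.aeval_C, Polynomial.aeval_X,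
        Algebra.algebraMap_self, RingHom.id_apply, Pi.add_apply, Pi.smul_apply, smul_eq_mul]
    rw [h2, MvPolynomial.aeval_def, Algebra.algebraMap_self]
    rfl
  have hP3 : P.natDegree = 3 :=
    le_antisymm hdP (Polynomial.le_natDegree_of_ne_zero (by rw [hcP]; exact hqy))
  have hPne : P ≠ 0 := fun h => hqy (by rw [← hcP, h, Polynomial.coeff_zero])
  have hint : IsIntegral K θ := IsIntegral.of_finite K θ
  have hm2 : (minpoly K θ).natDegree = 2 :=
    le_antisymm (by have h := minpoly.natDegree_le (A := K) θ; rwa [hdeg] at h)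
      ((minpoly.two_le_natDegree_iff hint).2 (by simpa [RingHom.mem_range] using hθ))
  obtain ⟨g, hg⟩ := minpoly.dvd K θ hPθ
  have hgne : g ≠ 0 := by rintro rfl; rw [mul_zero] at hg; exact hPne hg
  have hg1 : g.natDegree = 1 := by
    have h := Polynomial.natDegree_mul (minpoly.ne_zero hint) hgne
    rw [← hg, hP3, hm2] at h
    omega
  obtain ⟨t₀, ht₀⟩ := Polynomial.exists_root_of_degree_eq_one (p := g)
    (by rw [Polynomial.degree_eq_natDegree hgne, hg1]; rfl)
  have hPt : Polynomial.eval t₀ P = 0 := by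
    rw [hg, Polynomial.eval_mul, ht₀, mul_zero]
  have hw0 : eval (x + t₀ • y) q = 0 := by rw [← hPeval t₀]; exact hPt
  by_cases hw : x + t₀ • y = 0
  · exfalso
    have hxi : ∀ i, x i = -(t₀ * y i) := by
      intro i
      have h := congrFun hw i
      simp only [Pi.add_apply, Pi.smul_apply, smul_eq_mul, Pi.zero_apply] at h
      exact eq_neg_of_add_eq_zero_left h
    have hvθ : v = (θ - algebraMap K L t₀) • (fun i => algebraMap K L (y i)) := by
      funext i
      simp only [Pi.smul_apply, smul_eq_mul]
      rw [hv i, hxi i, map_neg, map_mul]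
      ring
    have h3 := hqv
    rw [hvθ, aux_eval_smul (hq.map (algebraMap K L)) _ _, hcomm y] at h3
    rcases mul_eq_zero.mp h3 with h4 | h4
    · have h5 : θ - algebraMap K L t₀ = 0 := pow_eq_zero_iff (by norm_num) |>.mp h4
      exact hθ ⟨t₀, (sub_eq_zero.mp h5).symm⟩
    · exact hqy (hinj (by rw [h4, map_zero]))
  · exact ⟨_, hw, hw0⟩
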